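/- In an isolated directed clique on m nodes (every node points to every other node, no other arcs), each node has PageRank score exactly 1/m; moreover, adding one outgoing arc from a single clique node to an external node does not increase the score of any clique node. -/

import Mathlib

open scoped Classical BigOperators

/-- Out-degree of `z` in the directed graph with arc relation `A`. -/
noncomputable def outDeg {V : Type*} [Fintype V] (A : V → V → Prop) (z : V) : ℕ :=
  (Finset.univ.filter fun w => A z w).card

/-- Random-surfer one-step transition matrix (rows of dangling nodes are zero). -/
noncomputable def stepM {V : Type*} [Fintype V] (A : V → V → Prop) : Matrix V V ℝ :=
  fun z w => if A z w then 1 / (outDeg A z : ℝ) else 0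

/-- PageRank contribution of `z` to `v`:
`P(z,v) = (1-α)/n · Σ_τ α^τ · inf_τ(z,v)` where `inf_τ(z,v) = (M^τ) z v`. -/
noncomputable def contrib {V : Type*} [Fintype V] (α : ℝ) (A : V → V → Prop) (z v : V) : ℝ :=
  (1 - α) / (Fintype.card V : ℝ) * ∑' τ : ℕ, α ^ τ * (stepM A ^ τ) z v

/-- PageRank score of `v` with damping factor `α`. -/
noncomputable def pagerank {V : Type*} [Fintype V] (α : ℝ) (A : V → V → Prop) (v : V) : ℝ :=
  (1 - α) / (Fintype.card V : ℝ) * ∑' τ : ℕ, α ^ τ * ∑ z, (stepM A ^ τ) z v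

section Aux

variable {V : Type*} [Fintype V]

lemma stepM_nonneg (A : V → V → Prop) (z w : V) : 0 ≤ stepM A z w := by
  unfold stepM; split <;> positivity

lemma pow_entry_nonneg (A : V → V → Prop) (τ : ℕ) (z w : V) : 0 ≤ (stepM A ^ τ) z w := by
  induction τ generalizing z w with
  | zero => rw [pow_zero, Matrix.one_apply]; split <;> norm_num
  | succ n ih =>
      rw [pow_succ, Matrix.mul_apply]
      exact Finset.sum_nonneg fun y _ => mul_nonneg (ih z y) (stepM_nonneg A y w)

lemma rowSum_le_one (A : V → V → Prop) (z : V) : ∑ w, stepM A z w ≤ 1 := by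
  unfold stepM
  rw [← Finset.sum_filter, Finset.sum_const, nsmul_eq_mul]
  show (outDeg A z : ℝ) * (1 / (outDeg A z : ℝ)) ≤ 1
  rcases Nat.eq_zero_or_pos (outDeg A z) with h | h
  · simp [h]
  · rw [mul_one_div, div_self (by positivity : (outDeg A z : ℝ) ≠ 0)]

lemma pow_rowSum_le_one (A : V → V → Prop) (τ : ℕ) (z : V) :
    ∑ w, (stepM A ^ τ) z w ≤ 1 := by
  induction τ generalizing z with
  | zero => simp [Matrix.one_apply]
  | succ n ih =>
      calc ∑ w, (stepM A ^ (n+1)) z w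
          = ∑ y, (stepM A ^ n) z y * ∑ w, stepM A y w := by
            simp [pow_succ, Matrix.mul_apply, Finset.mul_sum]
            rw [Finset.sum_comm]
        _ ≤ ∑ y, (stepM A ^ n) z y * 1 := by
            refine Finset.sum_le_sum fun y _ => ?_
            exact mul_le_mul_of_nonneg_left (rowSum_le_one A y) (pow_entry_nonneg A n z y)
        _ ≤ 1 := by simpa using ih z

lemma pow_entry_le_one (A : V → V → Prop) (τ : ℕ) (z w : V) : (stepM A ^ τ) z w ≤ 1 :=
  le_trans (Finset.single_le_sum (fun y _ => pow_entry_nonneg A τ z y) (Finset.mem_univ w))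
    (pow_rowSum_le_one A τ z)

lemma colSum_pow_eq_one (A : V → V → Prop) (hcol : ∀ v, ∑ z, stepM A z v = 1)
    (τ : ℕ) (v : V) : ∑ z, (stepM A ^ τ) z v = 1 := by
  induction τ generalizing v with
  | zero => simp [Matrix.one_apply]
  | succ n ih =>
      calc ∑ z, (stepM A ^ (n+1)) z v
          = ∑ y, (∑ z, (stepM A ^ n) z y) * stepM A y v := by
            simp [pow_succ, Matrix.mul_apply, Finset.sum_mul]
            rw [Finset.sum_comm]
        _ = ∑ y, stepM A y v := by
            refine Finset.sum_congr rfl fun y _ => ?_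
            rw [ih y, one_mul]
        _ = 1 := hcol v

lemma pr_summable (A : V → V → Prop) {α : ℝ} (h0 : 0 ≤ α) (h1 : α < 1) (x : V) :
    Summable (fun τ : ℕ => α ^ τ * ∑ z, (stepM A ^ τ) z x) := by
  refine Summable.of_nonneg_of_le
    (fun τ => mul_nonneg (pow_nonneg h0 τ)
      (Finset.sum_nonneg fun z _ => pow_entry_nonneg A τ z x))
    (fun τ => ?_) ((summable_geometric_of_lt_one h0 h1).mul_right (Fintype.card V : ℝ))
  refine mul_le_mul_of_nonneg_left ?_ (pow_nonneg h0 τ)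
  calc ∑ z, (stepM A ^ τ) z x ≤ ∑ _z : V, (1:ℝ) :=
        Finset.sum_le_sum fun z _ => pow_entry_le_one A τ z x
    _ = (Fintype.card V : ℝ) := by simp

lemma clique_outDeg (z : V) : outDeg (fun x y : V => x ≠ y) z = Fintype.card V - 1 := by
  unfold outDeg
  convert Finset.card_erase_of_mem (Finset.mem_univ z) using 2
  ext w; simp [eq_comm]
  rfl

lemma clique_colSum (h2 : 2 ≤ Fintype.card V) (v : V) :
    ∑ z, stepM (fun x y : V => x ≠ y) z v = 1 := by
  have hcard : (Finset.univ.filter fun z : V => z ≠ v).card = Fintype.card V - 1 := by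
    convert Finset.card_erase_of_mem (Finset.mem_univ v) using 2
    ext w; simp
    rfl
  calc ∑ z, stepM (fun x y : V => x ≠ y) z v
      = ∑ z, if z ≠ v then 1 / ((Fintype.card V - 1 : ℕ) : ℝ) else 0 := by
        refine Finset.sum_congr rfl fun z _ => ?_
        unfold stepM
        rw [clique_outDeg]
        by_cases h : z = v
        · simp [h]
        · simp [h]
    _ = 1 := by
        rw [← Finset.sum_filter, Finset.sum_const, hcard, nsmul_eq_mul, mul_one_div, div_self]
        have h1 : Fintype.card V - 1 ≠ 0 := by omega
        exact_mod_cast h1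

lemma escape_zero (C : Set V) (A : V → V → Prop)
    (hin : ∀ a b, A a b → b ∈ C → a ∈ C) (τ : ℕ) {x y : V}
    (hx : x ∈ C) (hy : y ∉ C) : (stepM A ^ τ) y x = 0 := by
  induction τ generalizing y with
  | zero =>
      rw [pow_zero, Matrix.one_apply_ne]
      rintro rfl; exact hy hx
  | succ n ih =>
      rw [pow_succ', Matrix.mul_apply]
      refine Finset.sum_eq_zero fun z _ => ?_
      by_cases hz : z ∈ C
      · have : ¬ A y z := fun h => hy (hin y z h hz)
        unfold stepM
        rw [if_neg this, zero_mul]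
      · rw [ih hz, mul_zero]

lemma dominate (C : Set V) (A A' : V → V → Prop)
    (hin' : ∀ a b, A' a b → b ∈ C → a ∈ C)
    (hle : ∀ z y, y ∈ C → stepM A' z y ≤ stepM A z y)
    (τ : ℕ) (z : V) {x : V} (hx : x ∈ C) :
    (stepM A' ^ τ) z x ≤ (stepM A ^ τ) z x := by
  induction τ generalizing z with
  | zero => rw [pow_zero, pow_zero]
  | succ n ih =>
      rw [pow_succ', pow_succ', Matrix.mul_apply, Matrix.mul_apply]
      refine Finset.sum_le_sum fun y _ => ?_
      by_cases hy : y ∈ C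
      · exact mul_le_mul (hle z y hy) (ih y) (pow_entry_nonneg A' n y x)
          (stepM_nonneg A z y)
      · rw [escape_zero C A' hin' n hx hy, mul_zero]
        exact mul_nonneg (stepM_nonneg A z y) (pow_entry_nonneg A n y x)

end Aux

/-- (i) In an isolated directed clique on `m` nodes (every node points to every other
node), each node has PageRank exactly `1/m`. (ii) If a clique sits inside a larger graph
with no other arcs touching it, adding one out-arc from a clique node `w0` to an external
node `e` does not increase the PageRank score of any clique node. -/
theorem stmt_13 (α : ℝ) (hα : α ∈ Set.Ioo (0:ℝ) 1) :
    (∀ (V : Type) [Fintype V], ∀ m : ℕ, m = Fintype.card V → 2 ≤ m →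
      ∀ v : V, pagerank α (fun x y : V => x ≠ y) v = 1 / (m : ℝ)) ∧
    (∀ (W : Type) [Fintype W], ∀ (C : Set W) (w0 e : W), w0 ∈ C → e ∉ C →
      ∀ B : W → W → Prop,
        (∀ x y, x ∈ C → (B x y ↔ (y ∈ C ∧ x ≠ y))) →
        (∀ x y, B x y → y ∈ C → x ∈ C) →
        ∀ x ∈ C,
          pagerank α (fun a b => B a b ∨ (a = w0 ∧ b = e)) x ≤ pagerank α B x) := by
  obtain ⟨hα0, hα1⟩ := hα
  have h1α : (0:ℝ) < 1 - α := by linarith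
  constructor
  · intro V _ m hm h2 v
    have h2' : 2 ≤ Fintype.card V := hm ▸ h2
    unfold pagerank
    have hts : ∑' τ : ℕ, α ^ τ * ∑ z, (stepM (fun x y : V => x ≠ y) ^ τ) z v
        = (1 - α)⁻¹ := by
      have hc : ∀ τ : ℕ, α ^ τ * ∑ z, (stepM (fun x y : V => x ≠ y) ^ τ) z v = α ^ τ := by
        intro τ
        rw [colSum_pow_eq_one _ (clique_colSum h2') τ v, mul_one]
      rw [tsum_congr hc]
      exact tsum_geometric_of_lt_one hα0.le hα1
    rw [hts, ← hm]
    have hm0 : (m : ℝ) ≠ 0 := by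
      have : 0 < m := by omega
      exact_mod_cast this.ne'
    have hne : (1 - α) ≠ 0 := ne_of_gt h1α
    field_simp
  · intro W _ C w0 e hw0 he B hBC hInto x hx
    set A' : W → W → Prop := fun a b => B a b ∨ (a = w0 ∧ b = e) with hA'
    have hin' : ∀ a b, A' a b → b ∈ C → a ∈ C := by
      rintro a b (h | ⟨rfl, rfl⟩) hb
      · exact hInto a b h hb
      · exact absurd hb he
    have hle : ∀ z y, y ∈ C → stepM A' z y ≤ stepM B z y := by
      intro z y hy
      by_cases hz : z = w0
      · subst hz
        have hye : y ≠ e := fun h => he (h ▸ hy)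
        have hiff : A' z y ↔ B z y := by
          constructor
          · rintro (h | ⟨_, rfl⟩)
            · exact h
            · exact absurd rfl hye
          · exact Or.inl
        have hnot : e ∉ Finset.univ.filter fun w => B z w := by
          simp only [Finset.mem_filter, Finset.mem_univ, true_and]
          intro hBe
          exact he ((hBC z e hw0).mp hBe).1
        have hdeg : outDeg A' z = outDeg B z + 1 := by
          unfold outDeg
          convert (Finset.card_insert_of_notMem hnot) using 2
          ext w
          simp only [Finset.mem_filter, Finset.mem_univ, true_and, Finset.mem_insert, hA']
          tauto
        unfold stepM
        by_cases hb : B z y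
        · rw [if_pos (hiff.mpr hb), if_pos hb, hdeg]
          have hd : 0 < outDeg B z := by
            apply Finset.card_pos.mpr
            exact ⟨y, Finset.mem_filter.mpr ⟨Finset.mem_univ y, hb⟩⟩
          apply one_div_le_one_div_of_le
          · exact_mod_cast hd
          · push_cast; linarith
        · rw [if_neg (fun h => hb (hiff.mp h)), if_neg hb]
      · have hiff : ∀ w, A' z w ↔ B z w := by
          intro w
          constructor
          · rintro (h | ⟨rfl, _⟩)
            · exact h
            · exact absurd rfl hz
          · exact Or.inl
        have hdeg : outDeg A' z = outDeg B z := by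
          unfold outDeg
          congr 1
          · ext w
            simp only [Finset.mem_filter, Finset.mem_univ, true_and]
            exact hiff w
        unfold stepM
        rw [hdeg]
        by_cases hb : B z y
        · rw [if_pos ((hiff y).mpr hb), if_pos hb]
        · rw [if_neg (fun h => hb ((hiff y).mp h)), if_neg hb]
    unfold pagerank
    apply mul_le_mul_of_nonneg_left _ (div_nonneg h1α.le (Nat.cast_nonneg _))
    refine Summable.tsum_le_tsum (fun τ => ?_) (pr_summable A' hα0.le hα1 x)
      (pr_summable B hα0.le hα1 x)
    refine mul_le_mul_of_nonneg_left ?_ (pow_nonneg hα0.le τ)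
    exact Finset.sum_le_sum fun z _ => dominate C B A' hin' hle τ z hx
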